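/- Let f(x) = x ln x (extended by 0 at 0) and let (t_i) be a probability vector. For two probability vectors r = (r_1,…,r_n) and s = (s_1,…,s_n) sorted in increasing order, if for all t in a neighborhood of 0, Σ_i f(t·r_i + (1-t)/n) = Σ_i f(t·s_i + (1-t)/n), then r = s. -/

import Mathlib

open Real Filter Finset


private lemma aux_hasDerivAt_lin (u a t : ℝ) : HasDerivAt (fun t : ℝ => u + t * a) a t := by
  simpa using (hasDerivAt_mul_const a).const_add u

private lemma aux_step0 (u a t : ℝ) (h : u + t * a ≠ 0) :
    HasDerivAt (fun t => (u + t * a) * Real.log (u + t * a))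
      (a * Real.log (u + t * a) + a) t := by
  have hu := aux_hasDerivAt_lin u a t
  have := hu.mul (hu.log h)
  refine this.congr_deriv ?_
  rw [mul_div_cancel₀ _ h]

private lemma aux_step1 (u a t : ℝ) (h : u + t * a ≠ 0) :
    HasDerivAt (fun t => a * Real.log (u + t * a) + a) (a ^ 2 / (u + t * a)) t := by
  have hu := aux_hasDerivAt_lin u a t
  have := ((hu.log h).const_mul a).add_const a
  refine this.congr_deriv ?_
  field_simp

private lemma aux_step2 (u a t : ℝ) (k : ℕ) (h : u + t * a ≠ 0) :
    HasDerivAt (fun t => a ^ (k + 2) / (u + t * a) ^ (k + 1))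
      (-((k : ℝ) + 1) * a ^ (k + 3) / (u + t * a) ^ (k + 2)) t := by
  have hu := aux_hasDerivAt_lin u a t
  have hg : HasDerivAt (fun t : ℝ => (u + t * a) ^ (k + 1))
      (((k : ℝ) + 1) * (u + t * a) ^ k * a) t := by
    have := hu.fun_pow (k + 1)
    simpa using this
  have := (hasDerivAt_const t (a ^ (k + 2))).div hg (pow_ne_zero _ h)
  refine this.congr_deriv ?_
  field_simp
  ring

private lemma aux_eventuallyEq_deriv {F G F' G' : ℝ → ℝ}
    (h : F =ᶠ[nhds (0:ℝ)] G)
    (hF : ∀ᶠ t in nhds (0:ℝ), HasDerivAt F (F' t) t)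
    (hG : ∀ᶠ t in nhds (0:ℝ), HasDerivAt G (G' t) t) :
    F' =ᶠ[nhds (0:ℝ)] G' := by
  have hd := h.deriv
  filter_upwards [hd, hF, hG] with t h1 h2 h3
  rw [← h2.deriv, ← h3.deriv]
  exact h1

private lemma aux_psum_eq (n : ℕ) (hn : 0 < n) (b c : Fin n → ℝ)
    (heq : (fun t => ∑ i, ((1:ℝ)/n + t * b i) * Real.log ((1:ℝ)/n + t * b i)) =ᶠ[nhds (0:ℝ)]
           (fun t => ∑ i, ((1:ℝ)/n + t * c i) * Real.log ((1:ℝ)/n + t * c i))) :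
    ∀ k, 2 ≤ k → ∑ i, b i ^ k = ∑ i, c i ^ k := by
  set u : ℝ := 1 / n with hu_def
  have hu : 0 < u := by positivity
  have hpos : ∀ (b : Fin n → ℝ), ∀ᶠ t in nhds (0:ℝ), ∀ i, 0 < u + t * b i := by
    intro b
    refine Filter.eventually_all.mpr fun i => ?_
    have hcont : ContinuousAt (fun t : ℝ => u + t * b i) 0 := by fun_prop
    have htend : Tendsto (fun t : ℝ => u + t * b i) (nhds 0) (nhds u) := by
      have := hcont.tendsto
      simpa using this
    exact htend.eventually (eventually_gt_nhds hu)
  have h1 := aux_eventuallyEq_deriv heq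
    (by filter_upwards [hpos b] with t ht
        exact HasDerivAt.fun_sum fun i _ => aux_step0 u (b i) t (ht i).ne')
    (by filter_upwards [hpos c] with t ht
        exact HasDerivAt.fun_sum fun i _ => aux_step0 u (c i) t (ht i).ne')
  have h2 := aux_eventuallyEq_deriv h1
    (by filter_upwards [hpos b] with t ht
        exact HasDerivAt.fun_sum fun i _ => aux_step1 u (b i) t (ht i).ne')
    (by filter_upwards [hpos c] with t ht
        exact HasDerivAt.fun_sum fun i _ => aux_step1 u (c i) t (ht i).ne')
  have hP : ∀ k : ℕ,
      (fun t => ∑ i, b i ^ (k + 2) / (u + t * b i) ^ (k + 1)) =ᶠ[nhds (0:ℝ)]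
      (fun t => ∑ i, c i ^ (k + 2) / (u + t * c i) ^ (k + 1)) := by
    intro k
    induction k with
    | zero => simpa using h2
    | succ k ih =>
      have hD := aux_eventuallyEq_deriv ih
        (by filter_upwards [hpos b] with t ht
            exact HasDerivAt.fun_sum fun i _ => aux_step2 u (b i) t k (ht i).ne')
        (by filter_upwards [hpos c] with t ht
            exact HasDerivAt.fun_sum fun i _ => aux_step2 u (c i) t k (ht i).ne')
      filter_upwards [hD] with t ht
      have hne : -((k : ℝ) + 1) ≠ 0 := neg_ne_zero.mpr (by positivity)
      apply mul_left_cancel₀ hne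
      rw [Finset.mul_sum, Finset.mul_sum]
      simpa [mul_div_assoc] using ht
  intro k hk
  obtain ⟨m, rfl⟩ : ∃ m, k = m + 2 := ⟨k - 2, by omega⟩
  have h0 := (hP m).eq_of_nhds
  simp only [zero_mul, add_zero] at h0
  rw [← Finset.sum_div, ← Finset.sum_div] at h0
  have hp : u ^ (m + 1) ≠ 0 := pow_ne_zero _ hu.ne'
  rw [div_eq_div_iff hp hp] at h0
  exact mul_right_cancel₀ hp h0


private lemma aux_esymm_eq (n : ℕ) (b c : Fin n → ℝ)
    (hp : ∀ k, 1 ≤ k → ∑ i, b i ^ k = ∑ i, c i ^ k) (k : ℕ) :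
    (Finset.univ.val.map b).esymm k = (Finset.univ.val.map c).esymm k := by
  induction k using Nat.strong_induction_on with
  | _ k ih =>
  rcases Nat.eq_zero_or_pos k with rfl | hk
  · simp [Multiset.esymm]
  · have hb := congrArg (MvPolynomial.aeval b) (MvPolynomial.mul_esymm_eq_sum (Fin n) ℝ k)
    have hc := congrArg (MvPolynomial.aeval c) (MvPolynomial.mul_esymm_eq_sum (Fin n) ℝ k)
    simp only [map_mul, map_sum, map_pow, map_neg, map_one, map_natCast,
      MvPolynomial.aeval_esymm_eq_multiset_esymm, MvPolynomial.psum,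
      MvPolynomial.aeval_X] at hb hc
    have hsum : ∑ a ∈ (antidiagonal k).filter (fun a => a.1 < k),
          (-1:ℝ) ^ a.1 * (Finset.univ.val.map b).esymm a.1 * (∑ i, b i ^ a.2)
        = ∑ a ∈ (antidiagonal k).filter (fun a => a.1 < k),
          (-1:ℝ) ^ a.1 * (Finset.univ.val.map c).esymm a.1 * (∑ i, c i ^ a.2) := by
      refine Finset.sum_congr rfl fun a ha => ?_
      obtain ⟨hmem, hlt⟩ := Finset.mem_filter.mp ha
      have hadd := Finset.HasAntidiagonal.mem_antidiagonal.mp hmem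
      have h2 : 1 ≤ a.2 := by omega
      rw [ih a.1 hlt, hp a.2 h2]
    have hkey : (k:ℝ) * (Finset.univ.val.map b).esymm k
        = (k:ℝ) * (Finset.univ.val.map c).esymm k := by
      rw [hb, hc, hsum]
    exact mul_left_cancel₀ (Nat.cast_ne_zero.mpr hk.ne') hkey

private lemma aux_multiset_eq (n : ℕ) (b c : Fin n → ℝ)
    (he : ∀ k, (Finset.univ.val.map b).esymm k = (Finset.univ.val.map c).esymm k) :
    Multiset.map b Finset.univ.val = Multiset.map c Finset.univ.val := by
  have hcb : Multiset.card (Multiset.map b Finset.univ.val) = n := by simp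
  have hcc : Multiset.card (Multiset.map c Finset.univ.val) = n := by simp
  have hpoly :
      ((Multiset.map b Finset.univ.val).map (fun a => Polynomial.X - Polynomial.C a)).prod
      = ((Multiset.map c Finset.univ.val).map (fun a => Polynomial.X - Polynomial.C a)).prod := by
    rw [Multiset.prod_X_sub_X_eq_sum_esymm, Multiset.prod_X_sub_X_eq_sum_esymm, hcb, hcc]
    exact Finset.sum_congr rfl fun j _ => by rw [he j]
  have hroots := congrArg Polynomial.roots hpoly
  rwa [Polynomial.roots_multiset_prod_X_sub_C, Polynomial.roots_multiset_prod_X_sub_C] at hroots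

private lemma aux_sorted_eq (n : ℕ) (b c : Fin n → ℝ) (hb : Monotone b) (hc : Monotone c)
    (h : Multiset.map b Finset.univ.val = Multiset.map c Finset.univ.val) : b = c := by
  rw [Fin.univ_val_map, Fin.univ_val_map, Multiset.coe_eq_coe] at h
  exact List.ofFn_injective (List.Perm.eq_of_sortedLE (List.sortedLE_ofFn_iff.mpr hb) (List.sortedLE_ofFn_iff.mpr hc) h)

open Real in
/-- Let `f(x) = x ln x` (with `f(0) = 0`, as given by
`Real.log 0 = 0`). If two sorted probability vectors `r, s` of length `n`
satisfy `∑ᵢ f(t rᵢ + (1-t)/n) = ∑ᵢ f(t sᵢ + (1-t)/n)` for all `t` in a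
neighborhood of `0`, then `r = s`. -/
theorem sorted_spectra_unique (n : ℕ) (hn : 0 < n)
    (r s : Fin n → ℝ)
    (hr0 : ∀ i, 0 ≤ r i) (hs0 : ∀ i, 0 ≤ s i)
    (hr1 : ∑ i, r i = 1) (hs1 : ∑ i, s i = 1)
    (hrmono : Monotone r) (hsmono : Monotone s)
    (heq : ∀ᶠ t in nhds (0 : ℝ),
      ∑ i, (t * r i + (1 - t) / n) * log (t * r i + (1 - t) / n) =
        ∑ i, (t * s i + (1 - t) / n) * log (t * s i + (1 - t) / n)) :
    r = s := by
  have hn' : (n : ℝ) ≠ 0 := Nat.cast_ne_zero.mpr hn.ne'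
  set b : Fin n → ℝ := fun i => r i - 1 / n with hb_def
  set c : Fin n → ℝ := fun i => s i - 1 / n with hc_def
  have harg : ∀ (x t : ℝ), (1:ℝ)/n + t * (x - 1/n) = t * x + (1 - t)/n := by
    intro x t
    field_simp
    ring
  have heq' : (fun t => ∑ i, ((1:ℝ)/n + t * b i) * Real.log ((1:ℝ)/n + t * b i)) =ᶠ[nhds (0:ℝ)]
      (fun t => ∑ i, ((1:ℝ)/n + t * c i) * Real.log ((1:ℝ)/n + t * c i)) := by
    filter_upwards [heq] with t ht
    calc ∑ i, ((1:ℝ)/n + t * b i) * Real.log ((1:ℝ)/n + t * b i)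
        = ∑ i, (t * r i + (1 - t)/n) * Real.log (t * r i + (1 - t)/n) :=
          Finset.sum_congr rfl fun i _ => by rw [hb_def, harg]
      _ = ∑ i, (t * s i + (1 - t)/n) * Real.log (t * s i + (1 - t)/n) := ht
      _ = ∑ i, ((1:ℝ)/n + t * c i) * Real.log ((1:ℝ)/n + t * c i) :=
          (Finset.sum_congr rfl fun i _ => by rw [hc_def, harg]).symm
  have hps := aux_psum_eq n hn b c heq'
  have hp1 : ∑ i, b i ^ 1 = ∑ i, c i ^ 1 := by
    simp only [pow_one, hb_def, hc_def, Finset.sum_sub_distrib, hr1, hs1]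
  have hp : ∀ k, 1 ≤ k → ∑ i, b i ^ k = ∑ i, c i ^ k := by
    intro k hk
    rcases Nat.lt_or_ge k 2 with h2 | h2
    · have : k = 1 := by omega
      subst this
      exact hp1
    · exact hps k h2
  have hbc : b = c :=
    aux_sorted_eq n b c
      (fun i j hij => sub_le_sub_right (hrmono hij) _)
      (fun i j hij => sub_le_sub_right (hsmono hij) _)
      (aux_multiset_eq n b c (aux_esymm_eq n b c hp))
  funext i
  have := congrFun hbc i
  simp only [hb_def, hc_def] at this
  linarith
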